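/- Let ⟨Σ,Δ⟩ be a finite default theory and ⟨Ξ,A⟩ its associated argumentation system. Then there is a bijection between the accessible structures of ⟨Ξ,A⟩ and the consistent extensions of ⟨Σ,Δ⟩. -/

import Mathlib

/-! ## Classical propositional logic -/

/-- Propositional formulas over a set of variables `V`. -/
inductive PropForm (V : Type) : Type
  | var : V → PropForm V
  | verum : PropForm V
  | falsum : PropForm V
  | neg : PropForm V → PropForm V
  | conj : PropForm V → PropForm V → PropForm V
  | disj : PropForm V → PropForm V → PropForm V
  | impl : PropForm V → PropForm V → PropForm V

namespace PropForm

/-- Truth-value of a formula under an assignment. -/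
def eval {V : Type} (v : V → Bool) : PropForm V → Bool
  | var a => v a
  | verum => true
  | falsum => false
  | neg φ => !(eval v φ)
  | conj φ ψ => eval v φ && eval v ψ
  | disj φ ψ => eval v φ || eval v ψ
  | impl φ ψ => !(eval v φ) || eval v ψ

/-- Renaming/embedding of variables. -/
def map {V W : Type} (f : V → W) : PropForm V → PropForm W
  | var a => var (f a)
  | verum => verum
  | falsum => falsum
  | neg φ => neg (map f φ)
  | conj φ ψ => conj (map f φ) (map f ψ)
  | disj φ ψ => disj (map f φ) (map f ψ)
  | impl φ ψ => impl (map f φ) (map f ψ)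

/-- The set of variables occurring in a formula. -/
def vars {V : Type} : PropForm V → Set V
  | var a => {a}
  | verum => ∅
  | falsum => ∅
  | neg φ => vars φ
  | conj φ ψ => vars φ ∪ vars ψ
  | disj φ ψ => vars φ ∪ vars ψ
  | impl φ ψ => vars φ ∪ vars ψ

end PropForm

/-- An assignment satisfies a set of formulas. -/
def Satisfies {V : Type} (v : V → Bool) (S : Set (PropForm V)) : Prop :=
  ∀ φ ∈ S, φ.eval v = true

/-- Satisfiability (= consistency, by classical completeness) of a set of formulas. -/
def Satisfiable {V : Type} (S : Set (PropForm V)) : Prop :=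
  ∃ v, Satisfies v S

/-- `S ⊢ φ` (classical propositional derivability = semantic entailment). -/
def Entails {V : Type} (S : Set (PropForm V)) (φ : PropForm V) : Prop :=
  ∀ v, Satisfies v S → φ.eval v = true

/-- `Th S`: the deductive closure of `S`. -/
def Th {V : Type} (S : Set (PropForm V)) : Set (PropForm V) :=
  {φ | Entails S φ}

/-! ## Default logic -/

/-- A default `pre : jus₁, …, jus_k / con`. -/
structure Default (P : Type) : Type where
  pre : PropForm P
  jus : List (PropForm P)
  con : PropForm P

/-- `E` is an extension of the default theory `⟨S, Δ⟩` (Reiter, via the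
sequence characterization): there is a sequence `Es` with `Es 0 = S`,
`Es (j+1) = Th (Es j) ∪ con {δ ∈ Δ : pre δ ∈ Es j and ¬β ∉ E for each justification β}`
and `E = ⋃ j, Es j`. -/
def IsExtension {P : Type} (S : Set (PropForm P)) (Δ : Finset (Default P))
    (E : Set (PropForm P)) : Prop :=
  ∃ Es : ℕ → Set (PropForm P),
    Es 0 = S ∧
    (∀ j, Es (j + 1) = Th (Es j) ∪
      {γ | ∃ δ ∈ Δ, γ = δ.con ∧ δ.pre ∈ Es j ∧ ∀ β ∈ δ.jus, PropForm.neg β ∉ E}) ∧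
    E = ⋃ j, Es j

/-! ## The translation into an argumentation system -/

/-- Fresh assumption propositions: one prerequisitional assumption `a_δ^p`,
justificational assumptions `a_{δ,i}^j`, and one consequential assumption `a_δ^c`
for each default `δ`. -/
inductive ALabel (P : Type) : Type
  | pre : Default P → ALabel P
  | jus : Default P → ℕ → ALabel P
  | con : Default P → ALabel P

/-- The variables of the argumentation theory: the original propositions `P`
together with the fresh assumptions. -/
abbrev VA (P : Type) : Type := P ⊕ ALabel P

/-- Embedding of formulas of `L_P` into the extended language. -/
def emb {P : Type} (φ : PropForm P) : PropForm (VA P) :=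
  φ.map Sum.inl

/-- The assumption `a` as an atomic formula. -/
def avar {P : Type} (a : ALabel P) : PropForm (VA P) :=
  PropForm.var (Sum.inr a)

/-- The translation `t(δ) = {a_δ^p → ¬pre(δ)} ∪ {a_{δ,i}^j → β_i} ∪ {a_δ^c → con(δ)}`. -/
def transDefault {P : Type} (δ : Default P) : Set (PropForm (VA P)) :=
  {PropForm.impl (avar (ALabel.pre δ)) (PropForm.neg (emb δ.pre))} ∪
  {φ | ∃ i : Fin δ.jus.length, φ = PropForm.impl (avar (ALabel.jus δ i)) (emb (δ.jus.get i))} ∪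
  {PropForm.impl (avar (ALabel.con δ)) (emb δ.con)}

/-- `Ξ = Σ ∪ ⋃_{δ ∈ Δ} t(δ)`, the argumentation theory associated with `⟨S, Δ⟩`. -/
def Xi {P : Type} (S : Set (PropForm P)) (Δ : Finset (Default P)) :
    Set (PropForm (VA P)) :=
  (emb '' S) ∪ ⋃ δ ∈ Δ, transDefault δ

/-! ## Terms, inconsistency, structures -/

/-- A literal over the assumptions: an assumption together with a sign. -/
structure ALit (P : Type) : Type where
  atom : ALabel P
  sign : Bool

/-- A term: a set of assumption literals with no complementary pair.
(The trivial term `{⊤}`, imposing no assumptions, is represented by `∅`.) -/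
def IsTerm {P : Type} (α : Set (ALit P)) : Prop :=
  ∀ a : ALabel P, ¬ (ALit.mk a true ∈ α ∧ ALit.mk a false ∈ α)

/-- The literal `ℓ` as a formula. -/
def ALit.form {P : Type} (ℓ : ALit P) : PropForm (VA P) :=
  if ℓ.sign then avar ℓ.atom else PropForm.neg (avar ℓ.atom)

/-- A set of literals as a set of formulas. -/
def litForms {P : Type} (α : Set (ALit P)) : Set (PropForm (VA P)) :=
  ALit.form '' α

/-- `α ∈ I(Ξ)`: the term `α` is inconsistent relative to `Ξ`,
i.e. `α ∪ Ξ` is unsatisfiable. -/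
def InI {P : Type} (Ξ : Set (PropForm (VA P))) (α : Set (ALit P)) : Prop :=
  ¬ Satisfiable (Ξ ∪ litForms α)

/-- `μI(Ξ)`: the minimal contradictions, i.e. the inconsistent terms none of whose
proper subsets is inconsistent relative to `Ξ`. -/
def muI {P : Type} (Ξ : Set (PropForm (VA P))) : Set (Set (ALit P)) :=
  {α | IsTerm α ∧ InI Ξ α ∧ ∀ β, β ⊂ α → ¬ InI Ξ β}

/-- `⟨α, 𝒜⟩` is a structure: `α` is a term consistent with `Ξ` and each single
literal of `𝒜` can be consistently added to `α`. -/
def IsStruct {P : Type} (Ξ : Set (PropForm (VA P))) (α 𝒜 : Set (ALit P)) : Prop :=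
  IsTerm α ∧ ¬ InI Ξ α ∧ ∀ ℓ ∈ 𝒜, ¬ InI Ξ (insert ℓ α)

/-- The (positive) prerequisitional assumption literal `a_δ^p` of `δ`. -/
def preLit {P : Type} (δ : Default P) : ALit P := ⟨ALabel.pre δ, true⟩

/-- The (positive) justificational assumption literal `a_{δ,i}^j` of `δ`. -/
def jusLit {P : Type} (δ : Default P) (i : ℕ) : ALit P := ⟨ALabel.jus δ i, true⟩

/-- The (positive) consequential assumption literal `a_δ^c` of `δ`. -/
def conLit {P : Type} (δ : Default P) : ALit P := ⟨ALabel.con δ, true⟩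

/-- The set of justificational assumption literals of `δ`. -/
def jusLits {P : Type} (δ : Default P) : Set (ALit P) :=
  {ℓ | ∃ i : Fin δ.jus.length, ℓ = jusLit δ i}

/-- `α ⊆ A_c`: `α` is a consequential term (every literal of `α` is the positive
consequential assumption of some default of `Δ`). -/
def ConsTerm {P : Type} (Δ : Finset (Default P)) (α : Set (ALit P)) : Prop :=
  ∀ ℓ ∈ α, ∃ δ ∈ Δ, ℓ = conLit δ

/-- The default assumption of `δ` is applicable w.r.t. the consequential term `α`:
`{a_δ^p} ∪ α ∈ I(Ξ)` and `{a_{δ,i}^j} ∪ α ∉ I(Ξ)` for every justification index `i`. -/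
def Applicable {P : Type} (Ξ : Set (PropForm (VA P))) (δ : Default P)
    (α : Set (ALit P)) : Prop :=
  InI Ξ (insert (preLit δ) α) ∧
  ∀ i : Fin δ.jus.length, ¬ InI Ξ (insert (jusLit δ i) α)

/-! ## Accessible structures and default terms -/

/-- One application step of the map `a_δ^≺` in the applicable case:
add `a_δ^c` to the anchor and the justificational assumptions of `δ`
to the set of irrelevant literals. -/
def stepPair {P : Type} (δ : Default P) (p : Set (ALit P) × Set (ALit P)) :
    Set (ALit P) × Set (ALit P) :=
  (insert (conLit δ) p.1, jusLits δ ∪ p.2)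

/-- The CJ-pair obtained by successively applying the default assumptions of `L`
starting from `⟨{⊤}, ∅⟩` (the trivial term being represented by `∅`). -/
def runList {P : Type} (L : List (Default P)) : Set (ALit P) × Set (ALit P) :=
  L.foldl (fun p δ => stepPair δ p) (∅, ∅)

/-- Starting from the CJ-pair `p`, the defaults of the list can be applied one
after the other: at each step the current pair is a structure and the next
default assumption is applicable w.r.t. the current anchor. -/
def ValidFrom {P : Type} (Ξ : Set (PropForm (VA P))) :
    Set (ALit P) × Set (ALit P) → List (Default P) → Prop
  | _, [] => True
  | p, δ :: L => IsStruct Ξ p.1 p.2 ∧ Applicable Ξ δ p.1 ∧ ValidFrom Ξ (stepPair δ p) L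

/-- `L` is a generating sequence of the structure `⟨α, 𝒜⟩`: a sequence of pairwise
distinct default assumptions of `Δ`, applicable one after the other starting from
`⟨{⊤}, ∅⟩`, ending exactly in the structure `⟨α, 𝒜⟩`, and such that no default
assumption of `Δ` applicable w.r.t. `α` is missing from the sequence. -/
def GenSeq {P : Type} (Ξ : Set (PropForm (VA P))) (Δ : Finset (Default P))
    (L : List (Default P)) (α 𝒜 : Set (ALit P)) : Prop :=
  L.Nodup ∧ (∀ δ ∈ L, δ ∈ Δ) ∧ ValidFrom Ξ (∅, ∅) L ∧ runList L = (α, 𝒜) ∧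
  IsStruct Ξ α 𝒜 ∧ ∀ δ ∈ Δ, Applicable Ξ δ α → δ ∈ L

/-- The structure `⟨α, 𝒜⟩` is accessible (w.r.t. the default assumptions of `Δ`). -/
def Accessible {P : Type} (Ξ : Set (PropForm (VA P))) (Δ : Finset (Default P))
    (α 𝒜 : Set (ALit P)) : Prop :=
  ∃ L : List (Default P), GenSeq Ξ Δ L α 𝒜

/-- `dt(Ξ)`: the default terms, i.e. the anchors of accessible structures. -/
def dt {P : Type} (Ξ : Set (PropForm (VA P))) (Δ : Finset (Default P)) :
    Set (Set (ALit P)) :=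
  {α | ∃ 𝒜, Accessible Ξ Δ α 𝒜}

/-! ## Supporting arguments -/

/-- `sp(φ; Ξ)`: the supporting arguments for `φ`, i.e. the terms `α` with
`α, Ξ ⊢ φ` such that every term extending `α` is consistent with `Ξ`. -/
def sp {P : Type} (Ξ : Set (PropForm (VA P))) (φ : PropForm (VA P)) :
    Set (Set (ALit P)) :=
  {α | IsTerm α ∧ Entails (Ξ ∪ litForms α) φ ∧
    ∀ α', IsTerm α' → α ⊆ α' → ¬ InI Ξ α'}

/-- `α⁺ = α ∩ A`: the positive literals of the term `α`. -/
def posPart {P : Type} (α : Set (ALit P)) : Set (ALit P) :=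
  {ℓ ∈ α | ℓ.sign = true}

/-! ## Auxiliary development -/

section Aux

open PropForm

variable {P : Type}

/-! ### Basic facts about entailment and `Th` -/

lemma eval_map {V W : Type} (f : V → W) (v : W → Bool) (φ : PropForm V) :
    (φ.map f).eval v = φ.eval (v ∘ f) := by
  induction φ <;> simp [PropForm.map, PropForm.eval, *]

lemma satisfiable_mono {V : Type} {T T' : Set (PropForm V)} (h : T ⊆ T')
    (hT' : Satisfiable T') : Satisfiable T := by
  obtain ⟨v, hv⟩ := hT'; exact ⟨v, fun φ hφ => hv φ (h hφ)⟩

lemma entails_mono {V : Type} {T T' : Set (PropForm V)} (h : T ⊆ T')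
    {φ : PropForm V} (hφ : Entails T φ) : Entails T' φ :=
  fun v hv => hφ v (fun ψ hψ => hv ψ (h hψ))

lemma subset_Th {V : Type} (T : Set (PropForm V)) : T ⊆ Th T :=
  fun φ hφ _ hv => hv φ hφ

lemma Th_mono {V : Type} {T T' : Set (PropForm V)} (h : T ⊆ T') : Th T ⊆ Th T' :=
  fun _ hφ => entails_mono h hφ

lemma Th_of_Th_subset {V : Type} {T T' : Set (PropForm V)} (h : T ⊆ Th T') :
    Th T ⊆ Th T' := by
  intro φ hφ v hv
  exact hφ v (fun ψ hψ => h hψ v hv)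

lemma Th_Th {V : Type} (T : Set (PropForm V)) : Th (Th T) = Th T :=
  Set.Subset.antisymm (Th_of_Th_subset (le_refl _)) (Th_mono (subset_Th T))

/-- `B ⊨ φ` iff `B ∪ {¬φ}` is unsatisfiable. -/
lemma entails_iff_not_sat {V : Type} (B : Set (PropForm V)) (φ : PropForm V) :
    Entails B φ ↔ ¬ Satisfiable (B ∪ {PropForm.neg φ}) := by
  constructor
  · rintro h ⟨v, hv⟩
    have h1 := h v (fun ψ hψ => hv ψ (Set.mem_union_left _ hψ))
    have h2 := hv (PropForm.neg φ) (Set.mem_union_right _ rfl)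
    simp [PropForm.eval, h1] at h2
  · intro h v hv
    by_contra hφ
    exact h ⟨v, by
      intro ψ hψ
      rcases hψ with hψ | hψ
      · exact hv ψ hψ
      · rcases hψ with rfl
        simp [PropForm.eval]
        simpa using hφ⟩

/-- `¬β ∉ Th B` iff `B ∪ {β}` is satisfiable. -/
lemma neg_not_mem_Th_iff {V : Type} (B : Set (PropForm V)) (β : PropForm V) :
    PropForm.neg β ∉ Th B ↔ Satisfiable (B ∪ {β}) := by
  rw [not_iff_comm]
  constructor
  · intro h
    show Entails B (PropForm.neg β)
    intro v hv
    by_contra hβ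
    exact h ⟨v, by
      intro ψ hψ
      rcases hψ with hψ | hψ
      · exact hv ψ hψ
      · rcases hψ with rfl
        simp [PropForm.eval] at hβ ⊢
        simpa using hβ⟩
  · rintro h ⟨v, hv⟩
    have h1 : Entails B (PropForm.neg β) := h
    have h2 := h1 v (fun ψ hψ => hv ψ (Set.mem_union_left _ hψ))
    have h3 := hv β (Set.mem_union_right _ rfl)
    simp [PropForm.eval, h3] at h2

lemma falsum_not_mem_Th_iff {V : Type} (B : Set (PropForm V)) :
    PropForm.falsum ∉ Th B ↔ Satisfiable B := by
  constructor
  · intro h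
    by_contra hs
    exact h (fun v hv => absurd ⟨v, hv⟩ hs)
  · rintro ⟨v, hv⟩ h
    have := h v hv
    simp [PropForm.eval] at this

/-! ### The semantics of the translation -/

/-- The formula of `L_P` governed by an assumption label. -/
def formSem : ALabel P → PropForm P
  | ALabel.pre δ => PropForm.neg δ.pre
  | ALabel.jus δ i => if h : i < δ.jus.length then δ.jus.get ⟨i, h⟩ else PropForm.verum
  | ALabel.con δ => δ.con

/-- A literal is good (w.r.t. `Δ`) if it is one of the positive assumption
literals of a default of `Δ`. -/
def GoodLit (Δ : Finset (Default P)) (ℓ : ALit P) : Prop :=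
  ∃ δ ∈ Δ, ℓ = preLit δ ∨ (∃ i : Fin δ.jus.length, ℓ = jusLit δ i) ∨ ℓ = conLit δ

lemma goodLit_sign {Δ : Finset (Default P)} {ℓ : ALit P} (h : GoodLit Δ ℓ) :
    ℓ.sign = true := by
  obtain ⟨δ, _, h | ⟨i, h⟩ | h⟩ := h <;> subst h <;> rfl

lemma isTerm_of_pos {α : Set (ALit P)} (h : ∀ ℓ ∈ α, ℓ.sign = true) : IsTerm α := by
  intro a ⟨h1, h2⟩
  have := h _ h2
  simp at this

/-- Key semantic lemma: for a set of good literals `α`, satisfiability of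
`Ξ ∪ α` is equivalent to satisfiability (in `L_P`) of `S` together with the
payload formulas of the literals of `α`. -/
lemma sat_Xi_iff (S : Finset (PropForm P)) (Δ : Finset (Default P))
    (α : Set (ALit P)) (hα : ∀ ℓ ∈ α, GoodLit Δ ℓ) :
    Satisfiable (Xi (↑S) Δ ∪ litForms α) ↔
      Satisfiable ((↑S : Set (PropForm P)) ∪ (fun ℓ => formSem ℓ.atom) '' α) := by
  constructor
  · rintro ⟨v, hv⟩
    refine ⟨v ∘ Sum.inl, ?_⟩
    rintro ψ (hψ | ⟨ℓ, hℓ, rfl⟩)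
    · have := hv (emb ψ) (Set.mem_union_left _ (Set.mem_union_left _ ⟨ψ, hψ, rfl⟩))
      rwa [emb, eval_map] at this
    · have hform : (ALit.form ℓ).eval v = true :=
        hv _ (Set.mem_union_right _ ⟨ℓ, hℓ, rfl⟩)
      obtain ⟨δ, hδ, h | ⟨i, h⟩ | h⟩ := hα ℓ hℓ <;> subst h
      · have hax := hv (PropForm.impl (avar (ALabel.pre δ)) (PropForm.neg (emb δ.pre)))
          (Set.mem_union_left _ (Set.mem_union_right _
            (Set.mem_biUnion hδ (Or.inl (Or.inl rfl)))))
        simp only [preLit, ALit.form, avar, PropForm.eval, if_true] at hform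
        simp only [emb, PropForm.eval, avar, hform, eval_map, Bool.not_true,
          Bool.false_or] at hax
        show PropForm.eval (v ∘ Sum.inl) (PropForm.neg δ.pre) = true
        simpa [PropForm.eval] using hax
      · have hax := hv (PropForm.impl (avar (ALabel.jus δ i)) (emb (δ.jus.get i)))
          (Set.mem_union_left _ (Set.mem_union_right _
            (Set.mem_biUnion hδ (Or.inl (Or.inr ⟨i, rfl⟩)))))
        simp only [jusLit, ALit.form, avar, PropForm.eval, if_true] at hform
        simp only [emb, PropForm.eval, avar, hform, eval_map, Bool.not_true,
          Bool.false_or] at hax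
        show PropForm.eval (v ∘ Sum.inl) (formSem (ALabel.jus δ ↑i)) = true
        simpa [formSem, i.isLt, List.get_eq_getElem] using hax
      · have hax := hv (PropForm.impl (avar (ALabel.con δ)) (emb δ.con))
          (Set.mem_union_left _ (Set.mem_union_right _
            (Set.mem_biUnion hδ (Or.inr rfl))))
        simp only [conLit, ALit.form, avar, PropForm.eval, if_true] at hform
        simp only [emb, PropForm.eval, avar, hform, eval_map, Bool.not_true,
          Bool.false_or] at hax
        exact hax
  · rintro ⟨w, hw⟩
    classical
    refine ⟨Sum.elim w (fun a => decide ((⟨a, true⟩ : ALit P) ∈ α)), ?_⟩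
    have hemb : ∀ φ : PropForm P,
        (emb φ).eval (Sum.elim w (fun a => decide ((⟨a, true⟩ : ALit P) ∈ α))) =
          φ.eval w := by
      intro φ; rw [emb, eval_map]; rfl
    have hpayload : ∀ a : ALabel P, (⟨a, true⟩ : ALit P) ∈ α →
        (formSem a).eval w = true := by
      intro a ha
      exact hw _ (Set.mem_union_right _ ⟨⟨a, true⟩, ha, rfl⟩)
    rintro ψ (hψ | hψ)
    · rcases hψ with ⟨φ, hφ, rfl⟩ | hψ
      · rw [hemb]; exact hw φ (Set.mem_union_left _ hφ)
      · rw [Set.mem_iUnion₂] at hψ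
        obtain ⟨δ, hδ, hmem⟩ := hψ
        rcases hmem with (h | ⟨i, rfl⟩) | h
        · rcases h with rfl
          simp only [PropForm.eval, avar]
          by_cases hmem : (⟨ALabel.pre δ, true⟩ : ALit P) ∈ α
          · have := hpayload _ hmem
            simp only [formSem, PropForm.eval] at this
            simp [hmem, PropForm.eval, hemb, this]
          · simp [hmem]
        · simp only [PropForm.eval, avar]
          by_cases hmem : (⟨ALabel.jus δ ↑i, true⟩ : ALit P) ∈ α
          · have := hpayload _ hmem
            simp only [formSem, i.isLt, dif_pos, Fin.eta, List.get_eq_getElem] at this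
            simp [hmem, hemb, this]
          · simp [hmem]
        · rcases h with rfl
          simp only [PropForm.eval, avar]
          by_cases hmem : (⟨ALabel.con δ, true⟩ : ALit P) ∈ α
          · have := hpayload _ hmem
            simp only [formSem] at this
            simp [hmem, hemb, this]
          · simp [hmem]
    · obtain ⟨ℓ, hℓ, rfl⟩ := hψ
      have hs := goodLit_sign (hα ℓ hℓ)
      obtain ⟨a, s⟩ := ℓ
      subst hs
      simp only [ALit.form, if_pos rfl, avar, PropForm.eval]
      exact decide_eq_true hℓ

/-! ### Specializations -/

/-- `S ∪ con(D)`, the base of the candidate extension determined by `D`. -/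
def baseSet (S : Finset (PropForm P)) (D : Set (Default P)) : Set (PropForm P) :=
  (↑S : Set (PropForm P)) ∪ Default.con '' D

lemma conLit_injective : Function.Injective (conLit : Default P → ALit P) := by
  intro a b h
  simpa [conLit] using h

lemma good_conLit {Δ : Finset (Default P)} {D : Set (Default P)} (hD : D ⊆ ↑Δ) :
    ∀ ℓ ∈ conLit '' D, GoodLit Δ ℓ := by
  rintro ℓ ⟨δ, hδ, rfl⟩
  exact ⟨δ, hD hδ, Or.inr (Or.inr rfl)⟩

lemma image_formSem_conLit (D : Set (Default P)) :
    (fun ℓ => formSem ℓ.atom) '' (conLit '' D) = Default.con '' D := by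
  rw [Set.image_image]
  rfl

lemma inI_conLit_iff (S : Finset (PropForm P)) {Δ : Finset (Default P)}
    {D : Set (Default P)} (hD : D ⊆ ↑Δ) :
    InI (Xi (↑S) Δ) (conLit '' D) ↔ ¬ Satisfiable (baseSet S D) := by
  unfold InI
  rw [sat_Xi_iff S Δ _ (good_conLit hD), image_formSem_conLit]
  rfl

lemma inI_insert_preLit_iff (S : Finset (PropForm P)) {Δ : Finset (Default P)}
    {D : Set (Default P)} {δ : Default P} (hδ : δ ∈ Δ) (hD : D ⊆ ↑Δ) :
    InI (Xi (↑S) Δ) (insert (preLit δ) (conLit '' D)) ↔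
      Entails (baseSet S D) δ.pre := by
  unfold InI
  rw [sat_Xi_iff S Δ _ (by
    rintro ℓ (rfl | hℓ)
    · exact ⟨δ, hδ, Or.inl rfl⟩
    · exact good_conLit hD _ hℓ)]
  rw [Set.image_insert_eq, image_formSem_conLit]
  rw [entails_iff_not_sat, Set.union_singleton]
  show ¬Satisfiable _ ↔ ¬Satisfiable _
  rw [Set.union_insert]
  rfl

lemma not_inI_insert_jusLit_iff (S : Finset (PropForm P)) {Δ : Finset (Default P)}
    {D : Set (Default P)} {δ : Default P} (hδ : δ ∈ Δ) (i : Fin δ.jus.length)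
    (hD : D ⊆ ↑Δ) :
    ¬ InI (Xi (↑S) Δ) (insert (jusLit δ ↑i) (conLit '' D)) ↔
      Satisfiable (baseSet S D ∪ {δ.jus.get i}) := by
  unfold InI
  rw [not_not]
  rw [sat_Xi_iff S Δ _ (by
    rintro ℓ (rfl | hℓ)
    · exact ⟨δ, hδ, Or.inr (Or.inl ⟨i, rfl⟩)⟩
    · exact good_conLit hD _ hℓ)]
  rw [Set.image_insert_eq, image_formSem_conLit]
  have : formSem ((jusLit δ ↑i).atom) = δ.jus.get i := by
    simp [jusLit, formSem, i.isLt]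
  rw [this, Set.union_singleton, Set.union_insert]
  rfl

/-! ### Runs of lists of defaults -/

/-- `runFrom p L`: apply the defaults of `L` starting at the pair `p`. -/
def runFrom (p : Set (ALit P) × Set (ALit P)) (L : List (Default P)) :
    Set (ALit P) × Set (ALit P) :=
  L.foldl (fun p δ => stepPair δ p) p

lemma runFrom_nil (p : Set (ALit P) × Set (ALit P)) : runFrom p [] = p := rfl

lemma runFrom_cons (p : Set (ALit P) × Set (ALit P)) (δ : Default P)
    (L : List (Default P)) : runFrom p (δ :: L) = runFrom (stepPair δ p) L := rfl

lemma runList_eq_runFrom (L : List (Default P)) : runList L = runFrom (∅, ∅) L := rfl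

lemma runFrom_fst (L : List (Default P)) :
    ∀ p, (runFrom p L).1 = p.1 ∪ conLit '' {δ | δ ∈ L} := by
  induction L with
  | nil => intro p; simp [runFrom]
  | cons δ L ih =>
    intro p
    rw [runFrom_cons, ih]
    ext ℓ
    simp only [stepPair, Set.mem_union, Set.mem_insert_iff, Set.mem_image,
      Set.mem_setOf_eq, List.mem_cons]
    constructor
    · rintro ((rfl | h) | ⟨x, hx, rfl⟩)
      · exact Or.inr ⟨δ, Or.inl rfl, rfl⟩
      · exact Or.inl h
      · exact Or.inr ⟨x, Or.inr hx, rfl⟩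
    · rintro (h | ⟨x, rfl | hx, rfl⟩)
      · exact Or.inl (Or.inr h)
      · exact Or.inl (Or.inl rfl)
      · exact Or.inr ⟨x, hx, rfl⟩

lemma runFrom_snd (L : List (Default P)) :
    ∀ p, (runFrom p L).2 = p.2 ∪ {ℓ | ∃ δ ∈ L, ℓ ∈ jusLits δ} := by
  induction L with
  | nil => intro p; simp [runFrom]
  | cons δ L ih =>
    intro p
    rw [runFrom_cons, ih]
    ext ℓ
    simp only [stepPair, Set.mem_union, Set.mem_setOf_eq, List.mem_cons]
    constructor
    · rintro ((h | h) | ⟨x, hx, hℓ⟩)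
      · exact Or.inr ⟨δ, Or.inl rfl, h⟩
      · exact Or.inl h
      · exact Or.inr ⟨x, Or.inr hx, hℓ⟩
    · rintro (h | ⟨x, rfl | hx, hℓ⟩)
      · exact Or.inl (Or.inr h)
      · exact Or.inl (Or.inl hℓ)
      · exact Or.inr ⟨x, hx, hℓ⟩

lemma validFrom_applicable {Ξ : Set (PropForm (VA P))} :
    ∀ (L : List (Default P)) (p : Set (ALit P) × Set (ALit P)),
      ValidFrom Ξ p L → ∀ (i : ℕ) (h : i < L.length),
        Applicable Ξ (L.get ⟨i, h⟩) (runFrom p (L.take i)).1 := by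
  intro L
  induction L with
  | nil => intro p _ i h; exact absurd h (Nat.not_lt_zero i)
  | cons δ L ih =>
    rintro p ⟨hstr, happ, hrest⟩ i h
    match i with
    | 0 => exact happ
    | (i + 1) =>
      rw [List.take_succ_cons, runFrom_cons]
      exact ih (stepPair δ p) hrest i (Nat.lt_of_succ_lt_succ h)

lemma validFrom_of {Ξ : Set (PropForm (VA P))} :
    ∀ (L : List (Default P)) (p : Set (ALit P) × Set (ALit P)),
      (∀ (i : ℕ) (h : i < L.length),
        IsStruct Ξ (runFrom p (L.take i)).1 (runFrom p (L.take i)).2 ∧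
        Applicable Ξ (L.get ⟨i, h⟩) (runFrom p (L.take i)).1) →
      ValidFrom Ξ p L := by
  intro L
  induction L with
  | nil => intro p _; trivial
  | cons δ L ih =>
    intro p hspec
    have h0 := hspec 0 (Nat.succ_pos _)
    rw [List.take_zero, runFrom_nil] at h0
    refine ⟨h0.1, h0.2, ih (stepPair δ p) ?_⟩
    intro i h
    have := hspec (i + 1) (Nat.succ_lt_succ h)
    rwa [List.take_succ_cons, runFrom_cons] at this

/-! ### From accessible structures to extensions -/

lemma genseq_props (S : Finset (PropForm P)) (Δ : Finset (Default P))
    {L : List (Default P)} {α 𝒜 : Set (ALit P)}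
    (hL : GenSeq (Xi (↑S) Δ) Δ L α 𝒜) :
    IsExtension (↑S) Δ (Th (baseSet S {δ' | δ' ∈ L})) ∧
    PropForm.falsum ∉ Th (baseSet S {δ' | δ' ∈ L}) ∧
    α = conLit '' {δ' | δ' ∈ L} ∧
    𝒜 = {ℓ | ∃ δ' ∈ L, ℓ ∈ jusLits δ'} ∧
    {δ | δ ∈ Δ ∧ δ.pre ∈ Th (baseSet S {δ' | δ' ∈ L}) ∧
      ∀ β ∈ δ.jus, PropForm.neg β ∉ Th (baseSet S {δ' | δ' ∈ L})} =
        {δ' | δ' ∈ L} := by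
  obtain ⟨hnd, hmemΔ, hvalid, hrun, hstruct, hmax⟩ := hL
  set D : Set (Default P) := {δ' | δ' ∈ L} with hD
  have hDΔ : D ⊆ ↑Δ := fun δ hδ => hmemΔ δ hδ
  set B : Set (PropForm P) := baseSet S D with hB
  set E : Set (PropForm P) := Th B with hE
  -- descriptions of α and 𝒜
  have hα : α = conLit '' D := by
    have := runFrom_fst L (∅, ∅)
    rw [← runList_eq_runFrom, hrun] at this
    simpa using this
  have h𝒜 : 𝒜 = {ℓ | ∃ δ' ∈ L, ℓ ∈ jusLits δ'} := by
    have := runFrom_snd L (∅, ∅)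
    rw [← runList_eq_runFrom, hrun] at this
    simpa using this
  -- facts from the final structure
  have hsatB : Satisfiable B := by
    have h1 := hstruct.2.1
    rw [hα, inI_conLit_iff S hDΔ, not_not] at h1
    exact h1
  have hjusSat : ∀ δ ∈ L, ∀ i : Fin δ.jus.length,
      Satisfiable (B ∪ {δ.jus.get i}) := by
    intro δ hδ i
    have hmem : jusLit δ ↑i ∈ 𝒜 := by
      rw [h𝒜]; exact ⟨δ, hδ, ⟨i, rfl⟩⟩
    have := hstruct.2.2 _ hmem
    rw [hα] at this
    rwa [not_inI_insert_jusLit_iff S (hmemΔ δ hδ) i hDΔ] at this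
  have hjusE : ∀ δ ∈ L, ∀ β ∈ δ.jus, PropForm.neg β ∉ E := by
    intro δ hδ β hβ
    obtain ⟨i, rfl⟩ := List.mem_iff_get.mp hβ
    rw [hE, neg_not_mem_Th_iff]
    exact hjusSat δ hδ i
  -- applicability along the sequence
  have happre : ∀ (i : ℕ) (h : i < L.length),
      Entails (baseSet S {δ' | δ' ∈ L.take i}) (L.get ⟨i, h⟩).pre := by
    intro i h
    have happ := validFrom_applicable L (∅, ∅) hvalid i h
    have hfst : (runFrom (∅, ∅) (L.take i)).1 = conLit '' {δ' | δ' ∈ L.take i} := by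
      rw [runFrom_fst]; simp
    rw [hfst] at happ
    have hprefΔ : {δ' | δ' ∈ L.take i} ⊆ ↑Δ :=
      fun δ' hδ' => hmemΔ δ' (List.mem_of_mem_take hδ')
    have := happ.1
    rwa [inI_insert_preLit_iff S (hmemΔ _ (L.get_mem _)) hprefΔ] at this
  -- membership in L from applicability w.r.t. the final anchor
  have happlic_of : ∀ δ ∈ Δ, δ.pre ∈ E → (∀ β ∈ δ.jus, PropForm.neg β ∉ E) →
      δ ∈ L := by
    intro δ hδ hpre hjus
    apply hmax δ hδ
    constructor
    · rw [hα, inI_insert_preLit_iff S hδ hDΔ]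
      exact hpre
    · intro i
      rw [hα, not_inI_insert_jusLit_iff S hδ i hDΔ, ← neg_not_mem_Th_iff]
      exact hjus _ (List.get_mem _ _)
  -- the Es sequence
  set Es : ℕ → Set (PropForm P) := fun j => Nat.rec (↑S : Set (PropForm P))
    (fun _ prev => Th prev ∪
      {γ | ∃ δ ∈ Δ, γ = δ.con ∧ δ.pre ∈ prev ∧
        ∀ β ∈ δ.jus, PropForm.neg β ∉ E}) j with hEsdef
  have hEsS : ∀ j, Es (j + 1) = Th (Es j) ∪
      {γ | ∃ δ ∈ Δ, γ = δ.con ∧ δ.pre ∈ Es j ∧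
        ∀ β ∈ δ.jus, PropForm.neg β ∉ E} := fun _ => rfl
  have hmono : ∀ j k, j ≤ k → Es j ⊆ Es k := by
    intro j k hjk
    induction hjk with
    | refl => exact le_refl _
    | step _ ih =>
      refine ih.trans ?_
      rw [hEsS]
      exact (subset_Th _).trans Set.subset_union_left
  have hEsub : ∀ j, Es j ⊆ E := by
    intro j
    induction j with
    | zero => exact (Set.subset_union_left).trans (subset_Th B)
    | succ j ih =>
      rw [hEsS]
      rintro γ (hγ | ⟨δ, hδ, rfl, hpre, hjus⟩)
      · rw [hE, ← Th_Th B]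
        exact Th_mono ih hγ
      · have hmem : δ ∈ L := happlic_of δ hδ (ih hpre) hjus
        exact (subset_Th B) (Set.mem_union_right _ ⟨δ, hmem, rfl⟩)
  have hconsEs : ∀ (i : ℕ), ∀ δ ∈ L.take i, δ.con ∈ Es (2 * i) := by
    intro i
    induction i with
    | zero => simp
    | succ i ih =>
      by_cases h : i < L.length
      · intro δ hδ
        rw [List.take_succ] at hδ
        rw [List.mem_append] at hδ
        rcases hδ with hδ | hδ
        · exact hmono (2 * i) (2 * (i + 1)) (by omega) (ih δ hδ)
        · have hδeq : δ = L.get ⟨i, h⟩ := by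
            simp [List.getElem?_eq_getElem h] at hδ
            simp [hδ]
          subst hδeq
          have hbase : baseSet S {δ' | δ' ∈ L.take i} ⊆ Es (2 * i) := by
            rintro φ (hφ | ⟨δ', hδ', rfl⟩)
            · exact hmono 0 (2 * i) (by omega) hφ
            · exact ih δ' hδ'
          have hpre : (L.get ⟨i, h⟩).pre ∈ Es (2 * i + 1) := by
            rw [hEsS]
            exact Set.mem_union_left _ (entails_mono hbase (happre i h))
          have hcon : (L.get ⟨i, h⟩).con ∈ Es (2 * i + 1 + 1) := by
            rw [hEsS (2 * i + 1)]
            refine Set.mem_union_right _ ⟨L.get ⟨i, h⟩,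
              hmemΔ _ (L.get_mem _), rfl, hpre, ?_⟩
            exact hjusE _ (L.get_mem _)
          have : 2 * (i + 1) = 2 * i + 1 + 1 := by omega
          rw [this]
          exact hcon
      · intro δ hδ
        have hle : L.length ≤ i := Nat.le_of_not_lt h
        rw [List.take_of_length_le (by omega)] at hδ
        have := ih δ (by rwa [List.take_of_length_le hle])
        exact hmono (2 * i) (2 * (i + 1)) (by omega) this
  have hBEs : B ⊆ Es (2 * L.length) := by
    rintro φ (hφ | ⟨δ, hδ, rfl⟩)
    · exact hmono 0 (2 * L.length) (by omega) hφ
    · exact hconsEs L.length δ (by rwa [List.take_length])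
  have hEeq : E = ⋃ j, Es j := by
    apply Set.Subset.antisymm
    · intro φ hφ
      have : φ ∈ Th (Es (2 * L.length)) := Th_mono hBEs hφ
      have : φ ∈ Es (2 * L.length + 1) := by
        rw [hEsS]; exact Set.mem_union_left _ this
      exact Set.mem_iUnion.mpr ⟨2 * L.length + 1, this⟩
    · exact Set.iUnion_subset hEsub
  refine ⟨⟨Es, rfl, fun j => rfl, hEeq⟩, ?_, hα, h𝒜, ?_⟩
  · rw [hE, falsum_not_mem_Th_iff]
    exact hsatB
  · apply Set.Subset.antisymm
    · rintro δ ⟨hδ, hpre, hjus⟩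
      exact happlic_of δ hδ hpre hjus
    · intro δ hδ
      refine ⟨hmemΔ δ hδ, ?_, hjusE δ hδ⟩
      obtain ⟨i, rfl⟩ := List.mem_iff_get.mp hδ
      have := happre i i.isLt
      have hsub : baseSet S {δ' | δ' ∈ L.take i} ⊆ B := by
        rintro φ (hφ | ⟨δ', hδ', rfl⟩)
        · exact Set.mem_union_left _ hφ
        · exact Set.mem_union_right _ ⟨δ', List.mem_of_mem_take hδ', rfl⟩
      exact entails_mono hsub (by simpa using this)

/-! ### From extensions to accessible structures -/

lemma extension_props (S : Finset (PropForm P)) (Δ : Finset (Default P))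
    {E : Set (PropForm P)} (hext : IsExtension (↑S) Δ E)
    (hcons : PropForm.falsum ∉ E) :
    E = Th (baseSet S {δ | δ ∈ Δ ∧ δ.pre ∈ E ∧ ∀ β ∈ δ.jus, PropForm.neg β ∉ E}) ∧
    ∃ L : List (Default P), GenSeq (Xi (↑S) Δ) Δ L
      (conLit '' {δ | δ ∈ Δ ∧ δ.pre ∈ E ∧ ∀ β ∈ δ.jus, PropForm.neg β ∉ E})
      {ℓ | ∃ δ' ∈ {δ | δ ∈ Δ ∧ δ.pre ∈ E ∧ ∀ β ∈ δ.jus, PropForm.neg β ∉ E},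
        ℓ ∈ jusLits δ'} := by
  classical
  obtain ⟨Es, hEs0, hEsS, hEU⟩ := hext
  set D : Set (Default P) :=
    {δ | δ ∈ Δ ∧ δ.pre ∈ E ∧ ∀ β ∈ δ.jus, PropForm.neg β ∉ E} with hDdef
  have hDΔ : D ⊆ ↑Δ := fun δ hδ => hδ.1
  set B : Set (PropForm P) := baseSet S D with hBdef
  -- monotonicity of the sequence
  have hmono : ∀ j k, j ≤ k → Es j ⊆ Es k := by
    intro j k hjk
    induction hjk with
    | refl => exact le_refl _
    | step _ ih =>
      refine ih.trans ?_
      rw [hEsS]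
      exact (subset_Th _).trans Set.subset_union_left
  have hEsubE : ∀ j, Es j ⊆ E := by
    intro j
    rw [hEU]
    exact Set.subset_iUnion _ j
  -- each Es j is contained in Th B
  have hEsTh : ∀ j, Es j ⊆ Th B := by
    intro j
    induction j with
    | zero => rw [hEs0]; exact Set.subset_union_left.trans (subset_Th B)
    | succ j ih =>
      rw [hEsS]
      rintro γ (hγ | ⟨δ, hδ, rfl, hpre, hjus⟩)
      · rw [← Th_Th B]; exact Th_mono ih hγ
      · exact subset_Th B (Set.mem_union_right _
          ⟨δ, ⟨hδ, hEsubE j hpre, hjus⟩, rfl⟩)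
  -- B is contained in E
  have hBE : B ⊆ E := by
    rintro φ (hφ | ⟨δ, hδ, rfl⟩)
    · rw [hEU]; exact Set.mem_iUnion.mpr ⟨0, by rwa [hEs0]⟩
    · have hpre : δ.pre ∈ E := hδ.2.1
      rw [hEU] at hpre
      obtain ⟨j, hj⟩ := Set.mem_iUnion.mp hpre
      rw [hEU]
      refine Set.mem_iUnion.mpr ⟨j + 1, ?_⟩
      rw [hEsS]
      exact Set.mem_union_right _ ⟨δ, hδ.1, rfl, hj, hδ.2.2⟩
  -- conversely, cons of D appear at some stage, uniformly
  have hconEs : ∀ δ ∈ D, ∃ j, δ.con ∈ Es j := by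
    intro δ hδ
    have hpre : δ.pre ∈ E := hδ.2.1
    rw [hEU] at hpre
    obtain ⟨j, hj⟩ := Set.mem_iUnion.mp hpre
    refine ⟨j + 1, ?_⟩
    rw [hEsS]
    exact Set.mem_union_right _ ⟨δ, hδ.1, rfl, hj, hδ.2.2⟩
  set DF : Finset (Default P) :=
    Δ.filter (fun δ => δ.pre ∈ E ∧ ∀ β ∈ δ.jus, PropForm.neg β ∉ E) with hDFdef
  have hDF : (↑DF : Set (Default P)) = D := by
    ext δ; simp [hDFdef, hDdef, Finset.mem_filter]
  set m : ℕ := DF.sup (fun δ => sInf {j | δ.con ∈ Es j}) with hmdef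
  have hBEs : B ⊆ Es m := by
    rintro φ (hφ | ⟨δ, hδ, rfl⟩)
    · have : φ ∈ Es 0 := by rwa [hEs0]
      exact hmono 0 m (Nat.zero_le m) this
    · have hδDF : δ ∈ DF := by rw [← hDF] at hδ; exact hδ
      have hne : {j | δ.con ∈ Es j}.Nonempty := hconEs δ hδ
      have h1 : δ.con ∈ Es (sInf {j | δ.con ∈ Es j}) := Nat.sInf_mem hne
      exact hmono _ m (Finset.le_sup hδDF) h1
  -- E = Th B
  have hETh : E = Th B := by
    apply Set.Subset.antisymm
    · rw [hEU]; exact Set.iUnion_subset hEsTh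
    · intro φ hφ
      have : φ ∈ Th (Es m) := Th_mono hBEs hφ
      have : φ ∈ Es (m + 1) := by
        rw [hEsS]; exact Set.mem_union_left _ this
      exact hEsubE _ this
  have hsatB : Satisfiable B := by
    rw [hETh, falsum_not_mem_Th_iff] at hcons
    exact hcons
  have hjusSatB : ∀ δ ∈ D, ∀ i : Fin δ.jus.length,
      Satisfiable (B ∪ {δ.jus.get i}) := by
    intro δ hδ i
    rw [← neg_not_mem_Th_iff, ← hETh]
    exact hδ.2.2 _ (List.get_mem _ _)
  refine ⟨hETh, ?_⟩
  -- ranks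
  set rank : Default P → ℕ := fun δ => sInf {j | δ.pre ∈ Es j} with hrankdef
  have hrankmem : ∀ δ ∈ D, δ.pre ∈ Es (rank δ) := by
    intro δ hδ
    have hpre : δ.pre ∈ E := hδ.2.1
    rw [hEU] at hpre
    exact Nat.sInf_mem (Set.mem_iUnion.mp hpre)
  -- the list
  set L : List (Default P) :=
    DF.toList.mergeSort (fun a b => decide (rank a ≤ rank b)) with hLdef
  have hLperm : L.Perm DF.toList := List.mergeSort_perm _ _
  have hLnd : L.Nodup := hLperm.nodup_iff.mpr (Finset.nodup_toList DF)
  have hLmem : ∀ δ, δ ∈ L ↔ δ ∈ D := by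
    intro δ
    rw [hLperm.mem_iff, Finset.mem_toList, ← hDF]
    rfl
  have hsorted : ∀ (i j : ℕ) (hi : i < L.length) (hj : j < L.length), i < j →
      rank L[i] ≤ rank L[j] := by
    have := List.pairwise_mergeSort (le := fun a b => decide (rank a ≤ rank b))
      (fun a b c hab hbc => by
        simp only [decide_eq_true_eq] at *; omega)
      (fun a b => by simp only [Bool.or_eq_true, decide_eq_true_eq]; omega)
      DF.toList
    rw [List.pairwise_iff_getElem] at this
    intro i j hi hj hij
    have h := this i j hi hj hij
    simpa using h
  -- all defaults of smaller rank appear in the prefix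
  have hpref : ∀ (i : ℕ) (h : i < L.length), ∀ δ' ∈ D,
      rank δ' < rank (L.get ⟨i, h⟩) → δ' ∈ L.take i := by
    intro i h δ' hδ' hrank
    have hmemL : δ' ∈ L := (hLmem δ').mpr hδ'
    obtain ⟨j, hj⟩ := List.mem_iff_get.mp hmemL
    rcases lt_or_ge (j : ℕ) i with hji | hij
    · have hlt : (j : ℕ) < (L.take i).length := by
        rw [List.length_take]
        exact lt_min hji j.isLt
      have heq : (L.take i)[(j : ℕ)]'hlt = L[(j : ℕ)] := List.getElem_take
      rw [← hj]
      have hmem : (L.take i)[(j : ℕ)]'hlt ∈ L.take i := List.getElem_mem hlt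
      rw [heq] at hmem
      simpa [List.get_eq_getElem] using hmem
    · exfalso
      rcases eq_or_lt_of_le hij with heq | hlt
      · apply absurd hrank
        rw [← hj]
        simp [List.get_eq_getElem, ← heq]
      · have := hsorted i j h j.isLt hlt
        rw [← hj] at hrank
        simp only [List.get_eq_getElem] at hrank
        omega
  -- stage bound: Es j ⊆ Th (base of defaults of rank < j)
  have hEsrank : ∀ j, Es j ⊆ Th (baseSet S {δ' | δ' ∈ D ∧ rank δ' < j}) := by
    intro j
    induction j with
    | zero => rw [hEs0]; exact Set.subset_union_left.trans (subset_Th _)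
    | succ j ih =>
      rw [hEsS]
      rintro γ (hγ | ⟨δ, hδ, rfl, hpre, hjus⟩)
      · have h1 : Th (Es j) ⊆ Th (baseSet S {δ' | δ' ∈ D ∧ rank δ' < j}) := by
          rw [← Th_Th (baseSet S {δ' | δ' ∈ D ∧ rank δ' < j})]
          exact Th_mono ih
        refine Th_mono ?_ (h1 hγ)
        apply Set.union_subset_union_right
        apply Set.image_mono
        rintro δ' ⟨h1', h2'⟩
        exact ⟨h1', by omega⟩
      · have hδD : δ ∈ D := ⟨hδ, hEsubE j hpre, hjus⟩
        have hrankle : rank δ ≤ j := Nat.sInf_le hpre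
        exact subset_Th _ (Set.mem_union_right _ ⟨δ, ⟨hδD, by omega⟩, rfl⟩)
  -- intermediate structures
  have hstr : ∀ (M : List (Default P)), (∀ δ' ∈ M, δ' ∈ D) →
      IsStruct (Xi (↑S) Δ) (conLit '' {δ' | δ' ∈ M})
        {ℓ | ∃ δ' ∈ M, ℓ ∈ jusLits δ'} := by
    intro M hM
    have hMΔ : {δ' | δ' ∈ M} ⊆ ↑Δ := fun δ' hδ' => hDΔ (hM δ' hδ')
    have hMB : baseSet S {δ' | δ' ∈ M} ⊆ B := by
      apply Set.union_subset_union_right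
      exact Set.image_mono (fun δ' hδ' => hM δ' hδ')
    refine ⟨isTerm_of_pos ?_, ?_, ?_⟩
    · rintro ℓ ⟨δ', _, rfl⟩; rfl
    · rw [inI_conLit_iff S hMΔ, not_not]
      exact satisfiable_mono hMB hsatB
    · rintro ℓ ⟨δ', hδ', ⟨i, rfl⟩⟩
      rw [not_inI_insert_jusLit_iff S (hMΔ hδ') i hMΔ]
      exact satisfiable_mono (Set.union_subset_union_left _ hMB)
        (hjusSatB δ' (hM δ' hδ') i)
  -- applicability at each step
  have happ : ∀ (i : ℕ) (h : i < L.length),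
      Applicable (Xi (↑S) Δ) (L.get ⟨i, h⟩) (conLit '' {δ' | δ' ∈ L.take i}) := by
    intro i h
    have hδD : L.get ⟨i, h⟩ ∈ D := (hLmem _).mp (L.get_mem _)
    have hprefD : ∀ δ' ∈ L.take i, δ' ∈ D :=
      fun δ' hδ' => (hLmem δ').mp (List.mem_of_mem_take hδ')
    have hprefΔ : {δ' | δ' ∈ L.take i} ⊆ ↑Δ := fun δ' hδ' => hDΔ (hprefD δ' hδ')
    constructor
    · rw [inI_insert_preLit_iff S (hDΔ hδD) hprefΔ]
      have h1 : (L.get ⟨i, h⟩).pre ∈ Es (rank (L.get ⟨i, h⟩)) := hrankmem _ hδD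
      have h2 := hEsrank (rank (L.get ⟨i, h⟩)) h1
      refine entails_mono ?_ h2
      apply Set.union_subset_union_right
      apply Set.image_mono
      rintro δ' ⟨hδ'D, hδ'rank⟩
      exact hpref i h δ' hδ'D hδ'rank
    · intro k
      rw [not_inI_insert_jusLit_iff S (hDΔ hδD) k hprefΔ]
      refine satisfiable_mono (Set.union_subset_union_left _ ?_) (hjusSatB _ hδD k)
      apply Set.union_subset_union_right
      exact Set.image_mono (fun δ' hδ' => hprefD δ' hδ')
  -- assemble the generating sequence
  refine ⟨L, hLnd, fun δ hδ => hDΔ ((hLmem δ).mp hδ), ?_, ?_, ?_, ?_⟩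
  · -- ValidFrom
    apply validFrom_of
    intro i h
    have hfst : (runFrom (∅, ∅) (L.take i)).1 = conLit '' {δ' | δ' ∈ L.take i} := by
      rw [runFrom_fst]; simp
    have hsnd : (runFrom (∅, ∅) (L.take i)).2 = {ℓ | ∃ δ' ∈ L.take i, ℓ ∈ jusLits δ'} := by
      rw [runFrom_snd]; simp
    rw [hfst, hsnd]
    exact ⟨hstr _ (fun δ' hδ' => (hLmem δ').mp (List.mem_of_mem_take hδ')), happ i h⟩
  · -- runList L = (α, 𝒜)
    have hLD : {δ' | δ' ∈ L} = D := by ext δ'; exact hLmem δ'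
    apply Prod.ext
    · rw [runList_eq_runFrom, runFrom_fst]
      simp [hLD]
    · rw [runList_eq_runFrom, runFrom_snd]
      simp only [Set.empty_union]
      ext ℓ
      constructor
      · rintro ⟨δ', hδ', hℓ⟩; exact ⟨δ', (hLmem δ').mp hδ', hℓ⟩
      · rintro ⟨δ', hδ', hℓ⟩; exact ⟨δ', (hLmem δ').mpr hδ', hℓ⟩
  · -- final structure
    have := hstr L (fun δ' hδ' => (hLmem δ').mp hδ')
    have hLD : {δ' | δ' ∈ L} = D := by ext δ'; exact hLmem δ'
    rw [hLD] at this
    convert this using 1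
    ext ℓ
    constructor
    · rintro ⟨δ', hδ', hℓ⟩; exact ⟨δ', (hLmem δ').mpr hδ', hℓ⟩
    · rintro ⟨δ', hδ', hℓ⟩; exact ⟨δ', (hLmem δ').mp hδ', hℓ⟩
  · -- maximality
    intro δ hδ happδ
    rw [hLmem]
    obtain ⟨h1, h2⟩ := happδ
    rw [inI_insert_preLit_iff S hδ hDΔ] at h1
    refine ⟨hδ, by rw [hETh]; exact h1, ?_⟩
    intro β hβ
    obtain ⟨i, rfl⟩ := List.mem_iff_get.mp hβ
    have := h2 i
    rw [not_inI_insert_jusLit_iff S hδ i hDΔ, ← neg_not_mem_Th_iff] at this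
    rwa [hETh]

/-- The generating defaults of a candidate extension `E`. -/
def genD (Δ : Finset (Default P)) (E : Set (PropForm P)) : Set (Default P) :=
  {δ | δ ∈ Δ ∧ δ.pre ∈ E ∧ ∀ β ∈ δ.jus, PropForm.neg β ∉ E}

end Aux

/-- Theorem 5.2.  For a finite default theory `⟨S, Δ⟩` with associated
argumentation system `⟨Ξ, A⟩`, there is a bijection between the accessible structures of
`⟨Ξ, A⟩` and the consistent extensions of `⟨S, Δ⟩`. -/
theorem accessible_structures_equiv_consistent_extensions
    {P : Type} (S : Finset (PropForm P)) (Δ : Finset (Default P)) :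
    Nonempty
      ({p : Set (ALit P) × Set (ALit P) // Accessible (Xi (↑S) Δ) Δ p.1 p.2} ≃
       {E : Set (PropForm P) // IsExtension (↑S) Δ E ∧ PropForm.falsum ∉ E}) := by
  classical
  have fprop : ∀ p : {p : Set (ALit P) × Set (ALit P) //
      Accessible (Xi (↑S) Δ) Δ p.1 p.2},
      IsExtension (↑S) Δ (Th (baseSet S {δ | conLit δ ∈ p.1.1})) ∧
        PropForm.falsum ∉ Th (baseSet S {δ | conLit δ ∈ p.1.1}) := by
    rintro ⟨⟨α, 𝒜⟩, hacc⟩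
    obtain ⟨L, hL⟩ := hacc
    obtain ⟨h1, h2, hα0, h𝒜0, h5⟩ := genseq_props S Δ hL
    have hα : α = conLit '' {δ' | δ' ∈ L} := hα0
    have h𝒜 : 𝒜 = {ℓ | ∃ δ' ∈ L, ℓ ∈ jusLits δ'} := h𝒜0
    have hset : {δ | conLit δ ∈ α} = {δ' | δ' ∈ L} := by
      rw [hα]
      ext δ
      exact conLit_injective.mem_set_image
    show IsExtension (↑S) Δ (Th (baseSet S {δ | conLit δ ∈ α})) ∧ _
    rw [hset]
    exact ⟨h1, h2⟩
  refine ⟨{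
    toFun := fun p => ⟨Th (baseSet S {δ | conLit δ ∈ p.1.1}), fprop p⟩,
    invFun := fun e => ⟨(conLit '' genD Δ e.1,
        {ℓ | ∃ δ' ∈ genD Δ e.1, ℓ ∈ jusLits δ'}),
      (extension_props S Δ e.2.1 e.2.2).2⟩,
    left_inv := ?_, right_inv := ?_ }⟩
  · rintro ⟨⟨α, 𝒜⟩, hacc⟩
    obtain ⟨L, hL⟩ := hacc
    obtain ⟨h1, h2, hα0, h𝒜0, h5⟩ := genseq_props S Δ hL
    have hα : α = conLit '' {δ' | δ' ∈ L} := hα0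
    have h𝒜 : 𝒜 = {ℓ | ∃ δ' ∈ L, ℓ ∈ jusLits δ'} := h𝒜0
    have hset : {δ | conLit δ ∈ α} = {δ' | δ' ∈ L} := by
      rw [hα]
      ext δ
      exact conLit_injective.mem_set_image
    apply Subtype.ext
    show (conLit '' genD Δ (Th (baseSet S {δ | conLit δ ∈ α})), _) = (α, 𝒜)
    have hgen : genD Δ (Th (baseSet S {δ | conLit δ ∈ α})) = {δ' | δ' ∈ L} := by
      rw [hset]
      exact h5
    apply Prod.ext
    · show conLit '' genD Δ (Th (baseSet S {δ | conLit δ ∈ α})) = α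
      rw [hgen, hα]
    · show {ℓ | ∃ δ' ∈ genD Δ (Th (baseSet S {δ | conLit δ ∈ α})), ℓ ∈ jusLits δ'} = 𝒜
      rw [hgen, h𝒜]
      rfl
  · rintro ⟨E, hE⟩
    apply Subtype.ext
    show Th (baseSet S {δ | conLit δ ∈ conLit '' genD Δ E}) = E
    have hset : {δ | conLit δ ∈ conLit '' genD Δ E} = genD Δ E := by
      ext δ
      exact conLit_injective.mem_set_image
    rw [hset]
    exact ((extension_props S Δ hE.1 hE.2).1).symm
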